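/- There exists exactly one 4-tuple (K, L, Q, Q0) of formal power series in ℚ[[t]] satisfying the system: K = t + t·L·Q0; L = 1 + L·Q; Q = 2t·L + t·L·(Q + 2·Q0 − 2·K); Q0 = t·L + t·L·(2·Q0 − K). Moreover, the series L of this unique solution satisfies the cubic equation t²·L³ + t·(t−4)·L² + (2t+1)·L − 1 = 0 in ℚ[[t]]. -/

import Mathlib

open PowerSeries

/-- The system (17) of the paper (prime decomposition, `k = 1`, after the
0/1 symmetry): `K = t + t L Q₀`, `L = 1 + L Q`,
`Q = 2t L + t L (Q + 2Q₀ − 2K)`, `Q₀ = t L + t L (2Q₀ − K)`. -/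
def SysLp1 (K L Q Q0 : PowerSeries ℚ) : Prop :=
  K = X + X * L * Q0 ∧
  L = 1 + L * Q ∧
  Q = 2 * X * L + X * L * (Q + 2 * Q0 - 2 * K) ∧
  Q0 = X * L + X * L * (2 * Q0 - K)


noncomputable section

private def Fit (A : PowerSeries ℚ) : PowerSeries ℚ :=
  1 - 2 * X * A + 4 * X * A ^ 2 - X ^ 2 * A ^ 2 - X ^ 2 * A ^ 3

private lemma Fit_dvd {A B : PowerSeries ℚ} {n : ℕ} (h : X ^ n ∣ A - B) :
    X ^ (n + 1) ∣ Fit A - Fit B := by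
  obtain ⟨c, hc⟩ := h
  refine ⟨c * (-2 + 4*(A+B) - X*(A+B) - X*(A^2+A*B+B^2)), ?_⟩
  unfold Fit
  linear_combination (X * (-2 + 4*(A+B) - X*(A+B) - X*(A^2+A*B+B^2))) * hc

private lemma Fit_stab (n : ℕ) : (X : PowerSeries ℚ) ^ n ∣ Fit^[n] 1 - Fit^[n+1] 1 := by
  induction n with
  | zero => simp
  | succ n ih =>
      rw [Function.iterate_succ_apply', Function.iterate_succ_apply']
      exact Fit_dvd ih

private lemma Fit_stab' {m n : ℕ} (h : m ≤ n) :
    (X : PowerSeries ℚ) ^ m ∣ Fit^[m] 1 - Fit^[n] 1 := by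
  induction n, h using Nat.le_induction with
  | base => simp
  | succ n hmn ih =>
      have h2 : (X : PowerSeries ℚ) ^ m ∣ Fit^[n] 1 - Fit^[n+1] 1 :=
        dvd_trans (pow_dvd_pow _ hmn) (Fit_stab n)
      simpa using dvd_add ih h2

private def Lsol : PowerSeries ℚ := PowerSeries.mk fun n => coeff n (Fit^[n+1] 1)

private lemma Lsol_close (n : ℕ) : (X : PowerSeries ℚ) ^ n ∣ Lsol - Fit^[n] 1 := by
  rw [X_pow_dvd_iff]
  intro m hm
  rw [map_sub, Lsol, coeff_mk]
  have h := Fit_stab' (show m + 1 ≤ n from hm)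
  rw [X_pow_dvd_iff] at h
  have h2 := h m (Nat.lt_succ_self m)
  rw [map_sub, sub_eq_zero] at h2
  rw [h2, sub_self]

private lemma Lsol_fixed : Fit Lsol = Lsol := by
  ext n
  have h1 := Fit_dvd (Lsol_close n)
  rw [X_pow_dvd_iff] at h1
  have h2 := h1 n (Nat.lt_succ_self n)
  rw [map_sub, sub_eq_zero] at h2
  rw [h2, show Fit (Fit^[n] 1) = Fit^[n+1] 1 from (Function.iterate_succ_apply' _ _ _).symm, Lsol, coeff_mk]

private lemma Lsol_cubic :
    X ^ 2 * Lsol ^ 3 + X * (X - 4) * Lsol ^ 2 + (2 * X + 1) * Lsol - 1 = 0 := by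
  have h := Lsol_fixed
  unfold Fit at h
  linear_combination -h

private def vden : PowerSeries ℚ := ((1 - X * Lsol) ^ 2)⁻¹

private lemma hv : (1 - X * Lsol) ^ 2 * vden = 1 := by
  apply PowerSeries.mul_inv_cancel
  simp

private lemma sys_sol :
    SysLp1 (X * (1 - 2*X*Lsol + X*Lsol^2) * vden) Lsol
      (2*X*Lsol*(1-X) * vden) (X*Lsol*(1-X) * vden) := by
  have hc := Lsol_cubic
  refine ⟨?_, ?_, ?_, ?_⟩
  · linear_combination X * hv
  · linear_combination vden * hc + (1 - Lsol) * hv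
  · linear_combination (2*X*Lsol) * hv
  · linear_combination (X*Lsol) * hv

private lemma ne_zero_of_cc_one {f : PowerSeries ℚ} (h : constantCoeff f = 1) : f ≠ 0 := by
  intro h0; rw [h0] at h; simp at h

private lemma keyA {K L Q Q0 : PowerSeries ℚ} (h : SysLp1 K L Q Q0) :
    K * (1 - X*L)^2 = X * (1 - 2*X*L + X*L^2) := by
  obtain ⟨h1, h2, h3, h4⟩ := h
  have e4 : Q0 * (1 - 2*X*L) = X*L*(1 - K) := by linear_combination h4
  linear_combination (1 - 2*X*L) * h1 + X*L * e4

private lemma keyB {K L Q Q0 : PowerSeries ℚ} (h : SysLp1 K L Q Q0) :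
    Q0 * (1 - X*L)^2 = X*L*(1-X) := by
  have hA := keyA h
  obtain ⟨h1, h2, h3, h4⟩ := h
  have e4 : Q0 * (1 - 2*X*L) = X*L*(1 - K) := by linear_combination h4
  have hne : (1 - 2*X*L : PowerSeries ℚ) ≠ 0 := ne_zero_of_cc_one (by simp)
  apply mul_left_cancel₀ hne
  linear_combination (1 - X*L)^2 * e4 - X*L * hA

private lemma keyC {K L Q Q0 : PowerSeries ℚ} (h : SysLp1 K L Q Q0) :
    Q * (1 - X*L)^2 = 2*X*L*(1-X) := by
  have hA := keyA h
  have hB := keyB h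
  obtain ⟨h1, h2, h3, h4⟩ := h
  have e3 : Q * (1 - X*L) = 2*X*L*(1 + Q0 - K) := by linear_combination h3
  have hne : (1 - X*L : PowerSeries ℚ) ≠ 0 := ne_zero_of_cc_one (by simp)
  apply mul_left_cancel₀ hne
  linear_combination (1 - X*L)^2 * e3 + 2*X*L * hB - 2*X*L * hA

private lemma cubic_of_sys {K L Q Q0 : PowerSeries ℚ} (h : SysLp1 K L Q Q0) :
    X ^ 2 * L ^ 3 + X * (X - 4) * L ^ 2 + (2 * X + 1) * L - 1 = 0 := by
  have hC := keyC h
  obtain ⟨h1, h2, h3, h4⟩ := h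
  linear_combination (1 - X*L)^2 * h2 + L * hC

private lemma L_unique {K L Q Q0 K' L' Q' Q0' : PowerSeries ℚ}
    (h : SysLp1 K L Q Q0) (h' : SysLp1 K' L' Q' Q0') : L = L' := by
  have hc := cubic_of_sys h
  have hc' := cubic_of_sys h'
  have hmul : (L - L') * (X^2*(L^2 + L*L' + L'^2) + X*(X-4)*(L + L') + (2*X+1)) = 0 := by
    linear_combination hc - hc'
  rcases mul_eq_zero.mp hmul with hz | hz
  · exact sub_eq_zero.mp hz
  · exact absurd hz (ne_zero_of_cc_one (by simp))

private lemma sys_unique {K L Q Q0 K' L' Q' Q0' : PowerSeries ℚ}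
    (h : SysLp1 K L Q Q0) (h' : SysLp1 K' L' Q' Q0') :
    K = K' ∧ L = L' ∧ Q = Q' ∧ Q0 = Q0' := by
  have hL : L = L' := L_unique h h'
  have hne : ((1 - X*L)^2 : PowerSeries ℚ) ≠ 0 := ne_zero_of_cc_one (by simp)
  have hK : K = K' := by
    apply mul_right_cancel₀ hne
    rw [keyA h, hL, keyA h']
  have hQ : Q = Q' := by
    apply mul_right_cancel₀ hne
    rw [keyC h, hL, keyC h']
  have hQ0 : Q0 = Q0' := by
    apply mul_right_cancel₀ hne
    rw [keyB h, hL, keyB h']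
  exact ⟨hK, hL, hQ, hQ0⟩

end

/-- There is exactly one 4-tuple `(K, L, Q, Q₀)` of power series in `ℚ[[t]]`
satisfying the system `SysLp1`, and the series `L` of this solution satisfies
the cubic equation (18) of the paper:
`t² L³ + t(t−4) L² + (2t+1) L − 1 = 0`. -/
theorem sysLp1_unique_and_cubic :
    (∃! v : PowerSeries ℚ × PowerSeries ℚ × PowerSeries ℚ × PowerSeries ℚ,
      SysLp1 v.1 v.2.1 v.2.2.1 v.2.2.2) ∧
    (∀ K L Q Q0 : PowerSeries ℚ, SysLp1 K L Q Q0 →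
      X ^ 2 * L ^ 3 + X * (X - 4) * L ^ 2 + (2 * X + 1) * L - 1 = 0) := by
  constructor
  · refine ⟨(X * (1 - 2*X*Lsol + X*Lsol^2) * vden, Lsol, 2*X*Lsol*(1-X) * vden,
      X*Lsol*(1-X) * vden), sys_sol, ?_⟩
    rintro ⟨K, L, Q, Q0⟩ h
    obtain ⟨hK, hL, hQ, hQ0⟩ := sys_unique h sys_sol
    simp_all
  · exact fun K L Q Q0 h => cubic_of_sys h
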